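/- Let r₁, …, rₙ be nonnegative rational numbers and let F = ℚ(√r₁, …, √rₙ) be the subfield of ℝ they generate over ℚ. Then F is flat: for every subfield E of F containing ℚ, the extension E/ℚ is Galois and every field automorphism σ of E satisfies σ ∘ σ = id. -/

import Mathlib

open Polynomial IntermediateField

lemma sq_one_comm {G : Type*} [Group G] (h : ∀ g : G, g * g = 1) (a b : G) :
    a * b = b * a := by
  have inv : ∀ g : G, g⁻¹ = g := fun g => inv_eq_of_mul_eq_one_right (h g)
  calc a * b = (a * b)⁻¹ := (inv _).symm
    _ = b⁻¹ * a⁻¹ := by group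
    _ = b * a := by rw [inv, inv]

lemma sq_one_normal {G : Type*} [Group G] (h : ∀ g : G, g * g = 1)
    (H : Subgroup G) : H.Normal := by
  constructor
  intro n hn g
  rw [sq_one_comm h g n, mul_assoc, mul_inv_cancel, mul_one]
  exact hn

set_option maxHeartbeats 2000000 in
set_option synthInstance.maxHeartbeats 400000 in
theorem adjoin_sqrts_flat (n : ℕ) (r : Fin n → ℚ) (hr : ∀ i, 0 ≤ r i) :
    ∀ E : IntermediateField ℚ ℝ,
      E ≤ IntermediateField.adjoin ℚ (Set.range fun i => Real.sqrt ((r i : ℝ))) →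
        IsGalois ℚ E ∧ ∀ σ : E ≃+* E, ∀ x : E, σ (σ x) = x := by
  intro E hEF0
  set s : Fin n → ℝ := fun i => Real.sqrt ((r i : ℝ)) with hs
  obtain ⟨F, hF⟩ : ∃ F : IntermediateField ℚ ℝ, F = IntermediateField.adjoin ℚ (Set.range s) :=
    ⟨_, rfl⟩
  have hEF : E ≤ F := hF ▸ hEF0
  -- the polynomial
  set p : ℚ[X] := ∏ i : Fin n, (X ^ 2 - C (r i)) with hp
  have hsq : ∀ i, s i ^ 2 = algebraMap ℚ ℝ (r i) := by
    intro i
    simp [hs, Real.sq_sqrt (by exact_mod_cast hr i : (0:ℝ) ≤ (r i : ℝ))]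
  have hmonic : p.Monic := monic_prod_of_monic _ _ fun i _ =>
    monic_X_pow_sub_C _ two_ne_zero
  have hpne : p ≠ 0 := hmonic.ne_zero
  -- p splits in ℝ
  have hsplits : (p.map (algebraMap ℚ ℝ)).Splits := by
    rw [hp, Polynomial.map_prod]
    apply Splits.prod
    intro i _
    have : (X ^ 2 - C (r i)).map (algebraMap ℚ ℝ)
        = (X + C (s i)) * (X - C (s i)) := by
      rw [Polynomial.map_sub, Polynomial.map_pow, map_X, map_C]
      rw [← sq_sub_sq, ← C_pow, hsq i]
    rw [this]
    exact Splits.mul (Splits.X_add_C _) (Splits.X_sub_C _)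
  have haev : ∀ x : ℝ, aeval x p = ∏ i : Fin n, (x ^ 2 - algebraMap ℚ ℝ (r i)) := by
    intro x
    rw [hp, map_prod]
    simp
  -- rootSet characterization
  have hroot : F = adjoin ℚ (p.rootSet ℝ) := by
    apply le_antisymm
    · rw [hF]
      apply adjoin_le_iff.mpr
      rintro _ ⟨i, rfl⟩
      apply subset_adjoin
      rw [mem_rootSet]
      refine ⟨hpne, ?_⟩
      rw [haev]
      apply Finset.prod_eq_zero (Finset.mem_univ i)
      rw [hsq i, sub_self]
    · rw [hF]
      apply adjoin_le_iff.mpr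
      intro x hx
      rw [mem_rootSet] at hx
      rw [haev] at hx
      obtain ⟨i, _, hi⟩ := Finset.prod_eq_zero_iff.mp hx.2
      rw [← hsq i, sub_eq_zero, sq, sq] at hi
      rcases mul_self_eq_mul_self_iff.mp hi with h' | h'
      · rw [h']; exact subset_adjoin ℚ _ ⟨i, rfl⟩
      · rw [h']
        exact neg_mem (subset_adjoin ℚ _ ⟨i, rfl⟩)
  have hsf : p.IsSplittingField ℚ F := by
    rw [hroot]
    exact adjoin_rootSet_isSplittingField hsplits
  haveI : FiniteDimensional ℚ F := IsSplittingField.finiteDimensional F p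
  haveI hnormF : Normal ℚ F := Normal.of_isSplittingField p
  haveI : IsGalois ℚ F := { }
  -- exponent 2
  have hexp : ∀ τ : F ≃ₐ[ℚ] F, τ * τ = 1 := by
    intro τ
    have : ((τ * τ : F ≃ₐ[ℚ] F) : F →ₐ[ℚ] F) = ((1 : F ≃ₐ[ℚ] F) : F →ₐ[ℚ] F) := by
      apply algHom_ext_of_eq_adjoin ℚ hF
      rintro _ ⟨i, rfl⟩
      set a : F := ⟨s i, hF ▸ subset_adjoin ℚ _ ⟨i, rfl⟩⟩ with ha
      have haa : (τ a) * (τ a) = a * a := by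
        rw [← map_mul]
        have h2 : a * a = algebraMap ℚ F (r i) := by
          apply Subtype.ext
          push_cast
          rw [show ((a : ℝ) * a = s i ^ 2) by rw [sq], hsq i]
          simp [IntermediateField.algebraMap_apply]
        rw [h2, AlgEquiv.commutes]
      show τ (τ a) = a
      rcases mul_self_eq_mul_self_iff.mp haa with h' | h'
      · rw [h', h']
      · rw [h', map_neg, h', neg_neg]
    exact AlgEquiv.ext fun x => AlgHom.congr_fun this x
  -- now the subfield part
  set E' : IntermediateField ℚ F := IntermediateField.restrict hEF with hE'
  haveI hnorm : (E'.fixingSubgroup).Normal := sq_one_normal hexp _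
  have hfix : IntermediateField.fixedField E'.fixingSubgroup = E' :=
    IsGalois.fixedField_fixingSubgroup E'
  haveI : IsGalois ℚ ↥E' :=
    { to_isSeparable := inferInstance,
      to_normal := Normal.of_algEquiv (IntermediateField.equivOfEq hfix) }
  let e : ↥E ≃ₐ[ℚ] ↥E' := IntermediateField.restrict_algEquiv hEF
  haveI : FiniteDimensional ℚ ↥E := e.symm.toLinearEquiv.finiteDimensional
  haveI : IsGalois ℚ ↥E :=
    { to_isSeparable := inferInstance,
      to_normal := Normal.of_algEquiv e.symm }
  refine ⟨inferInstance, ?_⟩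
  intro σ x
  -- make σ an AlgEquiv
  have hcomm : ∀ q : ℚ, σ (algebraMap ℚ E q) = algebraMap ℚ E q := by
    intro q
    rw [eq_ratCast (algebraMap ℚ E) q, map_ratCast]
  let σa : E ≃ₐ[ℚ] E := AlgEquiv.ofRingEquiv hcomm
  let ρ : ↥E' ≃ₐ[ℚ] ↥E' := (e.symm.trans σa).trans e
  obtain ⟨τ, hτ⟩ := AlgEquiv.restrictNormalHom_surjective (K₁ := ↥E') F ρ
  have hρ : ρ * ρ = 1 := by
    rw [← hτ, ← map_mul, hexp τ, map_one]
  have hρ' : ∀ y : ↥E', ρ (ρ y) = y := fun y => by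
    have := AlgEquiv.ext_iff.mp hρ y
    simpa using this
  have := hρ' (e x)
  simp only [ρ, AlgEquiv.trans_apply, AlgEquiv.symm_apply_apply] at this
  have h2 : σa (σa x) = x := e.injective this
  exact h2
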